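/- Let X₁ and X₂ be independent centered non-degenerate real random variables with Var[X₁] + Var[X₂] = 1, and let N be standard normal. Then d_K(X₁ + X₂, N) ≤ d_K(X₁/√Var[X₁], N) + d_K(X₂/√Var[X₂], N). -/

import Mathlib

open MeasureTheory ProbabilityTheory Real Set
open scoped NNReal ENNReal

lemma gaussianPDFReal_mul {v₁ v₂ : ℝ≥0} (h₁ : v₁ ≠ 0) (h₂ : v₂ ≠ 0) (z x : ℝ) :
    gaussianPDFReal 0 v₁ x * gaussianPDFReal 0 v₂ (z - x)
      = gaussianPDFReal 0 (v₁ + v₂) z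
        * gaussianPDFReal ((v₁ : ℝ) * z / ((v₁ : ℝ) + v₂)) (v₁ * v₂ / (v₁ + v₂)) x := by
  have hv₁ : (0:ℝ) < v₁ := lt_of_le_of_ne v₁.coe_nonneg (by exact_mod_cast h₁.symm)
  have hv₂ : (0:ℝ) < v₂ := lt_of_le_of_ne v₂.coe_nonneg (by exact_mod_cast h₂.symm)
  have hv : (0:ℝ) < (v₁:ℝ) + v₂ := by linarith
  have hπ : (0:ℝ) < π := pi_pos
  have hw : ((v₁ * v₂ / (v₁ + v₂) : ℝ≥0) : ℝ) = (v₁:ℝ) * v₂ / ((v₁:ℝ) + v₂) := by push_cast; ring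
  simp only [gaussianPDFReal, sub_zero, NNReal.coe_add, hw]
  rw [mul_mul_mul_comm, mul_mul_mul_comm ((√(2 * π * ((v₁:ℝ) + v₂)))⁻¹)]
  congr 1
  · rw [← mul_inv, ← mul_inv, ← Real.sqrt_mul (by positivity), ← Real.sqrt_mul (by positivity)]
    congr 1
    field_simp
  · rw [← Real.exp_add, ← Real.exp_add]
    congr 1
    field_simp
    ring

lemma lintegral_gaussianPDF_mul {v₁ v₂ : ℝ≥0} (h₁ : v₁ ≠ 0) (h₂ : v₂ ≠ 0) (z : ℝ) :
    ∫⁻ x, gaussianPDF 0 v₁ x * gaussianPDF 0 v₂ (z - x) = gaussianPDF 0 (v₁ + v₂) z := by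
  have hw : v₁ * v₂ / (v₁ + v₂) ≠ 0 :=
    div_ne_zero (mul_ne_zero h₁ h₂) (by simp [h₁])
  calc ∫⁻ x, gaussianPDF 0 v₁ x * gaussianPDF 0 v₂ (z - x)
      = ∫⁻ x, ENNReal.ofReal (gaussianPDFReal 0 (v₁ + v₂) z)
          * ENNReal.ofReal (gaussianPDFReal ((v₁ : ℝ) * z / ((v₁ : ℝ) + v₂))
              (v₁ * v₂ / (v₁ + v₂)) x) := by
        congr 1 with x
        rw [gaussianPDF, gaussianPDF, ← ENNReal.ofReal_mul (gaussianPDFReal_nonneg _ _ _),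
          gaussianPDFReal_mul h₁ h₂ z x,
          ENNReal.ofReal_mul (gaussianPDFReal_nonneg _ _ _)]
    _ = ENNReal.ofReal (gaussianPDFReal 0 (v₁ + v₂) z)
          * ∫⁻ x, ENNReal.ofReal (gaussianPDFReal ((v₁ : ℝ) * z / ((v₁ : ℝ) + v₂))
              (v₁ * v₂ / (v₁ + v₂)) x) := by
        rw [lintegral_const_mul _ (measurable_gaussianPDFReal _ _).ennreal_ofReal]
    _ = gaussianPDF 0 (v₁ + v₂) z := by
        rw [lintegral_gaussianPDFReal_eq_one _ hw, mul_one, gaussianPDF]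

lemma gaussian_conv_Iic {v₁ v₂ : ℝ≥0} (h₁ : v₁ ≠ 0) (h₂ : v₂ ≠ 0) (t : ℝ) :
    ∫⁻ x, gaussianReal 0 v₂ (Iic (t - x)) ∂(gaussianReal 0 v₁)
      = gaussianReal 0 (v₁ + v₂) (Iic t) := by
  have hf : Measurable fun x : ℝ => gaussianReal 0 v₂ (Iic (t - x)) := by
    have hS : MeasurableSet {p : ℝ × ℝ | p.1 + p.2 ≤ t} :=
      measurableSet_le (measurable_fst.add measurable_snd) measurable_const
    have h := measurable_measure_prodMk_left (ν := gaussianReal 0 v₂) hS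
    have hset : ∀ x : ℝ, Prod.mk x ⁻¹' {p : ℝ × ℝ | p.1 + p.2 ≤ t} = Iic (t - x) := by
      intro x; ext y; simp [le_sub_iff_add_le']
    simpa [hset] using h
  rw [gaussianReal_of_var_ne_zero 0 h₁,
    lintegral_withDensity_eq_lintegral_mul _ (measurable_gaussianPDF 0 v₁) hf]
  have key : ∀ x : ℝ, gaussianPDF 0 v₁ x * gaussianReal 0 v₂ (Iic (t - x))
      = ∫⁻ z in Iic t, gaussianPDF 0 v₁ x * gaussianPDF 0 v₂ (z - x) := by
    intro x
    rw [gaussianReal_apply 0 h₂, ← lintegral_const_mul _ (measurable_gaussianPDF 0 v₂)]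
    rw [← lintegral_indicator measurableSet_Iic, ← lintegral_indicator measurableSet_Iic]
    conv_rhs => rw [← lintegral_add_right_eq_self (fun z => (Iic t).indicator
        (fun z => gaussianPDF 0 v₁ x * gaussianPDF 0 v₂ (z - x)) z) x]
    congr 1 with y
    by_cases hy : y ≤ t - x
    · rw [Set.indicator_of_mem (by simpa using hy),
        Set.indicator_of_mem (by simp [mem_Iic]; linarith)]
      simp
    · rw [Set.indicator_of_notMem (by simpa using hy),
        Set.indicator_of_notMem (by simp only [mem_Iic, not_le] at hy ⊢; linarith)]
  simp_rw [Pi.mul_apply, key]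
  rw [lintegral_lintegral_swap]
  · rw [gaussianReal_apply 0 (by simp [h₁]) (Iic t)]
    refine setLIntegral_congr_fun measurableSet_Iic (fun z _ => ?_)
    exact lintegral_gaussianPDF_mul h₁ h₂ z
  · exact ((measurable_gaussianPDF 0 v₁).comp measurable_fst).mul
      ((measurable_gaussianPDF 0 v₂).comp (measurable_snd.sub measurable_fst)) |>.aemeasurable

lemma measurable_measure_Iic_sub (ρ : Measure ℝ) [SFinite ρ] (t : ℝ) :
    Measurable fun x : ℝ => ρ (Iic (t - x)) := by
  have hS : MeasurableSet {p : ℝ × ℝ | p.1 + p.2 ≤ t} :=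
    measurableSet_le (measurable_fst.add measurable_snd) measurable_const
  have h := measurable_measure_prodMk_left (ν := ρ) hS
  have hset : ∀ x : ℝ, Prod.mk x ⁻¹' {p : ℝ × ℝ | p.1 + p.2 ≤ t} = Iic (t - x) := by
    intro x; ext y; simp [le_sub_iff_add_le']
  simpa [hset] using h

lemma lintegral_Iic_sub_swap (ν ρ : Measure ℝ) [SFinite ν] [SFinite ρ] (t : ℝ) :
    ∫⁻ x, ρ (Iic (t - x)) ∂ν = ∫⁻ y, ν (Iic (t - y)) ∂ρ := by
  have hS : MeasurableSet {p : ℝ × ℝ | p.1 + p.2 ≤ t} :=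
    measurableSet_le (measurable_fst.add measurable_snd) measurable_const
  have hset : ∀ (x : ℝ), Prod.mk x ⁻¹' {p : ℝ × ℝ | p.1 + p.2 ≤ t} = Iic (t - x) := by
    intro x; ext y; simp [le_sub_iff_add_le']
  have h1 : ∫⁻ x, ρ (Iic (t - x)) ∂ν = (ν.prod ρ) {p : ℝ × ℝ | p.1 + p.2 ≤ t} := by
    rw [Measure.prod_apply hS]; simp_rw [hset]
  have h2 : ∫⁻ y, ν (Iic (t - y)) ∂ρ = (ρ.prod ν) {p : ℝ × ℝ | p.1 + p.2 ≤ t} := by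
    rw [Measure.prod_apply hS]; simp_rw [hset]
  rw [h1, h2, ← Measure.prod_swap,
    Measure.map_apply measurable_swap hS]
  congr 1
  ext p
  simp [add_comm]

lemma abs_toReal_sub_toReal_le_one {Ω : Type*} [MeasurableSpace Ω] {μ : Measure Ω}
    [IsProbabilityMeasure μ] (s₁ s₂ : Set Ω) :
    |(μ s₁).toReal - (μ s₂).toReal| ≤ 1 := by
  have h1 : (μ s₁).toReal ≤ 1 := by
    simpa using ENNReal.toReal_mono ENNReal.one_ne_top prob_le_one
  have h2 : (μ s₂).toReal ≤ 1 := by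
    simpa using ENNReal.toReal_mono ENNReal.one_ne_top prob_le_one
  have h3 : (0:ℝ) ≤ (μ s₁).toReal := ENNReal.toReal_nonneg
  have h4 : (0:ℝ) ≤ (μ s₂).toReal := ENNReal.toReal_nonneg
  rw [abs_sub_le_iff]
  constructor <;> linarith

lemma abs_integral_sub_integral_le {ν : Measure ℝ} [IsProbabilityMeasure ν] {f g : ℝ → ℝ}
    (hfm : Measurable f) (hgm : Measurable g)
    (hf1 : ∀ x, ‖f x‖ ≤ 1) (hg1 : ∀ x, ‖g x‖ ≤ 1)
    {D : ℝ} (h : ∀ x, |f x - g x| ≤ D) :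
    |∫ x, f x ∂ν - ∫ x, g x ∂ν| ≤ D := by
  have hf : Integrable f ν :=
    (integrable_const 1).mono' hfm.aestronglyMeasurable (ae_of_all _ hf1)
  have hg : Integrable g ν :=
    (integrable_const 1).mono' hgm.aestronglyMeasurable (ae_of_all _ hg1)
  rw [← integral_sub hf hg]
  calc |∫ x, (f x - g x) ∂ν| ≤ ∫ x, |f x - g x| ∂ν := by simpa [Real.norm_eq_abs] using norm_integral_le_integral_norm (μ := ν) (fun x => f x - g x)
    _ ≤ ∫ _x, D ∂ν := integral_mono (hf.sub hg).abs (integrable_const D) h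
    _ = D := by simp

/-- Kolmogorov distance between (the laws of) two real random variables. -/
noncomputable def dK {Ω : Type*} [MeasurableSpace Ω] (μ : Measure Ω) (X Y : Ω → ℝ) : ℝ :=
  ⨆ t : ℝ, |(μ {ω | X ω ≤ t}).toReal - (μ {ω | Y ω ≤ t}).toReal|

lemma norm_toReal_le_one {Ω : Type*} [MeasurableSpace Ω] {μ : Measure Ω}
    [IsProbabilityMeasure μ] (s : Set Ω) : ‖(μ s).toReal‖ ≤ 1 := by
  rw [Real.norm_eq_abs, abs_of_nonneg ENNReal.toReal_nonneg]
  simpa using ENNReal.toReal_mono ENNReal.one_ne_top prob_le_one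

theorem kolmogorov_independent_pair
    {Ω : Type*} [MeasurableSpace Ω] (μ : Measure Ω) [IsProbabilityMeasure μ]
    (X₁ X₂ N : Ω → ℝ)
    (h2a : MemLp X₁ 2 μ) (h2b : MemLp X₂ 2 μ)
    (hindep : IndepFun X₁ X₂ μ)
    (h0a : ∫ ω, X₁ ω ∂μ = 0) (h0b : ∫ ω, X₂ ω ∂μ = 0)
    (hva : 0 < variance X₁ μ) (hvb : 0 < variance X₂ μ)
    (hvar : variance X₁ μ + variance X₂ μ = 1)
    (hN : Measure.map N μ = gaussianReal 0 1) :
    dK μ (fun ω => X₁ ω + X₂ ω) N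
      ≤ dK μ (fun ω => X₁ ω / Real.sqrt (variance X₁ μ)) N
        + dK μ (fun ω => X₂ ω / Real.sqrt (variance X₂ μ)) N := by
  classical
  have hX₁ : AEMeasurable X₁ μ := h2a.aestronglyMeasurable.aemeasurable
  have hX₂ : AEMeasurable X₂ μ := h2b.aestronglyMeasurable.aemeasurable
  have hNae : AEMeasurable N μ := aemeasurable_of_map_neZero (by rw [hN]; infer_instance)
  set v₁ := variance X₁ μ with hv₁def
  set v₂ := variance X₂ μ with hv₂def
  set σ₁ := Real.sqrt v₁ with hσ₁def
  set σ₂ := Real.sqrt v₂ with hσ₂def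
  have hσ₁ : 0 < σ₁ := Real.sqrt_pos.mpr hva
  have hσ₂ : 0 < σ₂ := Real.sqrt_pos.mpr hvb
  set V₁ : ℝ≥0 := ⟨v₁, hva.le⟩ with hV₁def
  set V₂ : ℝ≥0 := ⟨v₂, hvb.le⟩ with hV₂def
  have hV₁0 : V₁ ≠ 0 := by
    intro h
    have : (V₁ : ℝ) = 0 := by rw [h]; simp
    rw [hV₁def] at this
    exact hva.ne' this
  have hV₂0 : V₂ ≠ 0 := by
    intro h
    have : (V₂ : ℝ) = 0 := by rw [h]; simp
    rw [hV₂def] at this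
    exact hvb.ne' this
  have hVsum : V₁ + V₂ = 1 := by
    rw [← NNReal.coe_inj]
    push_cast
    exact hvar
  set ν₁ := μ.map X₁ with hν₁def
  set ν₂ := μ.map X₂ with hν₂def
  haveI : IsProbabilityMeasure ν₁ := Measure.isProbabilityMeasure_map hX₁
  haveI : IsProbabilityMeasure ν₂ := Measure.isProbabilityMeasure_map hX₂
  set γ₁ := gaussianReal 0 V₁ with hγ₁def
  set γ₂ := gaussianReal 0 V₂ with hγ₂def
  set γ := gaussianReal 0 1 with hγdef
  -- law of the sum
  have hA : ∀ t : ℝ, μ {ω | X₁ ω + X₂ ω ≤ t} = ∫⁻ x, ν₂ (Iic (t - x)) ∂ν₁ := by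
    intro t
    have hS : MeasurableSet {p : ℝ × ℝ | p.1 + p.2 ≤ t} :=
      measurableSet_le (measurable_fst.add measurable_snd) measurable_const
    have hset : ∀ x : ℝ, Prod.mk x ⁻¹' {p : ℝ × ℝ | p.1 + p.2 ≤ t} = Iic (t - x) := by
      intro x; ext y; simp [le_sub_iff_add_le']
    have hmap : μ.map (fun ω => (X₁ ω, X₂ ω)) = ν₁.prod ν₂ :=
      (indepFun_iff_map_prod_eq_prod_map_map hX₁ hX₂).mp hindep
    calc μ {ω | X₁ ω + X₂ ω ≤ t}
        = μ ((fun ω => (X₁ ω, X₂ ω)) ⁻¹' {p : ℝ × ℝ | p.1 + p.2 ≤ t}) := rfl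
      _ = (μ.map (fun ω => (X₁ ω, X₂ ω))) {p : ℝ × ℝ | p.1 + p.2 ≤ t} :=
          (Measure.map_apply_of_aemeasurable (hX₁.prodMk hX₂) hS).symm
      _ = (ν₁.prod ν₂) {p : ℝ × ℝ | p.1 + p.2 ≤ t} := by rw [hmap]
      _ = ∫⁻ x, ν₂ (Prod.mk x ⁻¹' {p : ℝ × ℝ | p.1 + p.2 ≤ t}) ∂ν₁ := Measure.prod_apply hS
      _ = ∫⁻ x, ν₂ (Iic (t - x)) ∂ν₁ := by simp_rw [hset]
  -- law of N
  have hB : ∀ t : ℝ, μ {ω | N ω ≤ t} = γ (Iic t) := by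
    intro t
    calc μ {ω | N ω ≤ t} = μ (N ⁻¹' Iic t) := rfl
      _ = (μ.map N) (Iic t) := (Measure.map_apply_of_aemeasurable hNae measurableSet_Iic).symm
      _ = γ (Iic t) := by rw [hN]
  have hF₁ : ∀ s : ℝ, μ {ω | X₁ ω ≤ s} = ν₁ (Iic s) := fun s =>
    (Measure.map_apply_of_aemeasurable hX₁ measurableSet_Iic).symm
  have hF₂ : ∀ s : ℝ, μ {ω | X₂ ω ≤ s} = ν₂ (Iic s) := fun s =>
    (Measure.map_apply_of_aemeasurable hX₂ measurableSet_Iic).symm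
  -- scaling of the gaussian cdf
  have hscale : ∀ (V : ℝ≥0) (σ : ℝ), 0 < σ → (V : ℝ) = σ ^ 2 →
      ∀ s : ℝ, gaussianReal 0 V (Iic s) = γ (Iic (s / σ)) := by
    intro V σ hσ hσV s
    have hmap := gaussianReal_map_const_mul (μ := 0) (v := 1) σ
    have hv : NNReal.mk (σ ^ 2) (sq_nonneg σ) * 1 = V := by
      rw [mul_one]
      exact NNReal.coe_injective (by simp [hσV])
    rw [mul_zero, hv] at hmap
    rw [← hmap, Measure.map_apply (measurable_id'.const_mul σ) measurableSet_Iic, hγdef]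
    congr 1
    ext x
    simp only [Set.mem_preimage, mem_Iic, id_eq]
    rw [le_div_iff₀ hσ, mul_comm]
  have hscale₁ : ∀ s : ℝ, γ₁ (Iic s) = γ (Iic (s / σ₁)) :=
    hscale V₁ σ₁ hσ₁ (Real.sq_sqrt hva.le).symm
  have hscale₂ : ∀ s : ℝ, γ₂ (Iic s) = γ (Iic (s / σ₂)) :=
    hscale V₂ σ₂ hσ₂ (Real.sq_sqrt hvb.le).symm
  set D₁ := dK μ (fun ω => X₁ ω / σ₁) N with hD₁def
  set D₂ := dK μ (fun ω => X₂ ω / σ₂) N with hD₂def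
  -- pointwise Kolmogorov bounds
  have hD₁ : ∀ s : ℝ, |(ν₁ (Iic s)).toReal - (γ₁ (Iic s)).toReal| ≤ D₁ := by
    intro s
    have h1 : {ω | X₁ ω / σ₁ ≤ s / σ₁} = {ω | X₁ ω ≤ s} := by
      ext ω
      simp only [Set.mem_setOf_eq]
      exact div_le_div_iff_of_pos_right hσ₁
    have key : |(ν₁ (Iic s)).toReal - (γ₁ (Iic s)).toReal|
        = |(μ {ω | X₁ ω / σ₁ ≤ s / σ₁}).toReal - (μ {ω | N ω ≤ s / σ₁}).toReal| := by
      rw [h1, hF₁ s, hB (s / σ₁), ← hscale₁ s]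
    rw [key, hD₁def]
    simp only [dK]
    have bdd : BddAbove (Set.range fun u : ℝ =>
        |(μ {ω | X₁ ω / σ₁ ≤ u}).toReal - (μ {ω | N ω ≤ u}).toReal|) := by
      refine ⟨1, ?_⟩
      rintro y ⟨u, rfl⟩
      exact abs_toReal_sub_toReal_le_one _ _
    exact le_ciSup bdd (s / σ₁)
  have hD₂ : ∀ s : ℝ, |(ν₂ (Iic s)).toReal - (γ₂ (Iic s)).toReal| ≤ D₂ := by
    intro s
    have h1 : {ω | X₂ ω / σ₂ ≤ s / σ₂} = {ω | X₂ ω ≤ s} := by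
      ext ω
      simp only [Set.mem_setOf_eq]
      exact div_le_div_iff_of_pos_right hσ₂
    have key : |(ν₂ (Iic s)).toReal - (γ₂ (Iic s)).toReal|
        = |(μ {ω | X₂ ω / σ₂ ≤ s / σ₂}).toReal - (μ {ω | N ω ≤ s / σ₂}).toReal| := by
      rw [h1, hF₂ s, hB (s / σ₂), ← hscale₂ s]
    rw [key, hD₂def]
    simp only [dK]
    have bdd : BddAbove (Set.range fun u : ℝ =>
        |(μ {ω | X₂ ω / σ₂ ≤ u}).toReal - (μ {ω | N ω ≤ u}).toReal|) := by
      refine ⟨1, ?_⟩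
      rintro y ⟨u, rfl⟩
      exact abs_toReal_sub_toReal_le_one _ _
    exact le_ciSup bdd (s / σ₂)
  -- per-t bound
  have hmain : ∀ t : ℝ,
      |(μ {ω | X₁ ω + X₂ ω ≤ t}).toReal - (μ {ω | N ω ≤ t}).toReal| ≤ D₁ + D₂ := by
    intro t
    have mν₂ : Measurable fun x : ℝ => ν₂ (Iic (t - x)) := measurable_measure_Iic_sub ν₂ t
    have mγ₂ : Measurable fun x : ℝ => γ₂ (Iic (t - x)) := measurable_measure_Iic_sub γ₂ t
    have mν₁ : Measurable fun x : ℝ => ν₁ (Iic (t - x)) := measurable_measure_Iic_sub ν₁ t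
    have mγ₁ : Measurable fun x : ℝ => γ₁ (Iic (t - x)) := measurable_measure_Iic_sub γ₁ t
    have ha : (μ {ω | X₁ ω + X₂ ω ≤ t}).toReal = ∫ x, (ν₂ (Iic (t - x))).toReal ∂ν₁ := by
      rw [hA t, ← integral_toReal mν₂.aemeasurable (ae_of_all _ fun x => measure_lt_top _ _)]
    have hbc : ∫ x, (γ₂ (Iic (t - x))).toReal ∂ν₁ = ∫ y, (ν₁ (Iic (t - y))).toReal ∂γ₂ := by
      rw [integral_toReal mγ₂.aemeasurable (ae_of_all _ fun x => measure_lt_top _ _),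
        integral_toReal mν₁.aemeasurable (ae_of_all _ fun x => measure_lt_top _ _),
        lintegral_Iic_sub_swap ν₁ γ₂ t]
    have hd : (μ {ω | N ω ≤ t}).toReal = ∫ y, (γ₁ (Iic (t - y))).toReal ∂γ₂ := by
      rw [hB t, integral_toReal mγ₁.aemeasurable (ae_of_all _ fun x => measure_lt_top _ _),
        lintegral_Iic_sub_swap γ₂ γ₁ t, gaussian_conv_Iic hV₁0 hV₂0 t, hVsum]
    have habs₂ : |∫ x, (ν₂ (Iic (t - x))).toReal ∂ν₁ - ∫ x, (γ₂ (Iic (t - x))).toReal ∂ν₁| ≤ D₂ :=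
      abs_integral_sub_integral_le mν₂.ennreal_toReal mγ₂.ennreal_toReal
        (fun x => norm_toReal_le_one _) (fun x => norm_toReal_le_one _)
        (fun x => hD₂ (t - x))
    have habs₁ : |∫ y, (ν₁ (Iic (t - y))).toReal ∂γ₂ - ∫ y, (γ₁ (Iic (t - y))).toReal ∂γ₂| ≤ D₁ :=
      abs_integral_sub_integral_le mν₁.ennreal_toReal mγ₁.ennreal_toReal
        (fun x => norm_toReal_le_one _) (fun x => norm_toReal_le_one _)
        (fun x => hD₁ (t - x))
    calc |(μ {ω | X₁ ω + X₂ ω ≤ t}).toReal - (μ {ω | N ω ≤ t}).toReal|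
        = |∫ x, (ν₂ (Iic (t - x))).toReal ∂ν₁ - ∫ y, (γ₁ (Iic (t - y))).toReal ∂γ₂| := by
          rw [ha, hd]
      _ ≤ |∫ x, (ν₂ (Iic (t - x))).toReal ∂ν₁ - ∫ x, (γ₂ (Iic (t - x))).toReal ∂ν₁|
            + |∫ x, (γ₂ (Iic (t - x))).toReal ∂ν₁ - ∫ y, (γ₁ (Iic (t - y))).toReal ∂γ₂| :=
          abs_sub_le _ _ _
      _ ≤ D₂ + D₁ := by
          rw [← hbc] at habs₁
          exact add_le_add habs₂ habs₁
      _ = D₁ + D₂ := add_comm _ _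
  simp only [dK]
  exact ciSup_le hmain
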